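/- arXiv:0810.4567 — 2 statements merged into one kernel-verified Lean document; each statement's English description precedes it below -/
import Mathlib

section
/- Let Λ be a finitely-aligned k-graph, let v be a vertex, F ⊆ vΛ a finite exhaustive set, and η ∈ vΛ. Then Ext(η; F) := ⋃_{λ ∈ F} {α : (α, β) ∈ Λ^min(η, λ) for some β} is a finite exhaustive subset of s(η)Λ. -/
/-- A `k`-graph: a countable small category `Λ` with a degree functor
`d : Λ → ℕ^k` satisfying the unique factorization property. -/
structure KGraph (k : ℕ) where
  Obj : Type
  Mor : Type
  obj_countable : Countable Obj
  mor_countable : Countable Mor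
  r : Mor → Obj
  s : Mor → Obj
  ide : Obj → Mor
  comp : Mor → Mor → Mor
  r_ide : ∀ v, r (ide v) = v
  s_ide : ∀ v, s (ide v) = v
  r_comp : ∀ μ ν, s μ = r ν → r (comp μ ν) = r μ
  s_comp : ∀ μ ν, s μ = r ν → s (comp μ ν) = s ν
  ide_comp : ∀ μ, comp (ide (r μ)) μ = μ
  comp_ide : ∀ μ, comp μ (ide (s μ)) = μ
  comp_assoc : ∀ μ ν ρ, s μ = r ν → s ν = r ρ →
    comp (comp μ ν) ρ = comp μ (comp ν ρ)
  d : Mor → Fin k → ℕ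
  d_ide : ∀ v, d (ide v) = 0
  d_comp : ∀ μ ν, s μ = r ν → d (comp μ ν) = d μ + d ν
  factor : ∀ (lam : Mor) (m n : Fin k → ℕ), d lam = m + n →
    ∃! p : Mor × Mor, s p.1 = r p.2 ∧ comp p.1 p.2 = lam ∧ d p.1 = m ∧ d p.2 = n

namespace KGraph

variable {k : ℕ} {Λ : KGraph k}

/-- The set `Λ^min(λ,μ)` of minimal common extensions of `λ` and `μ`. -/
def MinExt (Λ : KGraph k) (lam mu : Λ.Mor) : Set (Λ.Mor × Λ.Mor) :=
  {p | Λ.s lam = Λ.r p.1 ∧ Λ.s mu = Λ.r p.2 ∧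
    Λ.comp lam p.1 = Λ.comp mu p.2 ∧
    Λ.d (Λ.comp lam p.1) = Λ.d lam ⊔ Λ.d mu}

/-- `Λ` is finitely aligned if all `Λ^min(λ,μ)` are finite. -/
def FinitelyAligned (Λ : KGraph k) : Prop :=
  ∀ lam mu : Λ.Mor, (Λ.MinExt lam mu).Finite

/-- `E ⊆ vΛ` is exhaustive. -/
def Exhaustive (Λ : KGraph k) (v : Λ.Obj) (E : Set Λ.Mor) : Prop :=
  (∀ lam ∈ E, Λ.r lam = v) ∧
  ∀ mu : Λ.Mor, Λ.r mu = v → ∃ lam ∈ E, (Λ.MinExt lam mu).Nonempty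

/-- `Ext(η; F)`. -/
def ExtSet (Λ : KGraph k) (η : Λ.Mor) (F : Set Λ.Mor) : Set Λ.Mor :=
  ⋃ lam ∈ F, {α | ∃ β, (α, β) ∈ Λ.MinExt η lam}

/-- `Λ` has no sources: `vΛ^{e_i} ≠ ∅` for all `v`, `i`. -/
def NoSources (Λ : KGraph k) : Prop :=
  ∀ (v : Λ.Obj) (i : Fin k), ∃ lam : Λ.Mor, Λ.r lam = v ∧ Λ.d lam = Pi.single i 1

end KGraph

/-- A path in `Λ`, i.e. a degree-preserving functor `x : Ω_{k,m} → Λ`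
where `m = deg x ∈ (ℕ ∪ {∞})^k`.  `vert p = x(p)` and `seg p q = x(p,q)`
for `p ≤ q ≤ deg x` (values outside that range are irrelevant junk). -/
structure KPath {k : ℕ} (Λ : KGraph k) where
  deg : Fin k → ℕ∞
  vert : (Fin k → ℕ) → Λ.Obj
  seg : (Fin k → ℕ) → (Fin k → ℕ) → Λ.Mor
  r_seg : ∀ p q, p ≤ q → (∀ i, (q i : ℕ∞) ≤ deg i) → Λ.r (seg p q) = vert p
  s_seg : ∀ p q, p ≤ q → (∀ i, (q i : ℕ∞) ≤ deg i) → Λ.s (seg p q) = vert q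
  d_seg : ∀ p q, p ≤ q → (∀ i, (q i : ℕ∞) ≤ deg i) → Λ.d (seg p q) = q - p
  comp_seg : ∀ p q r, p ≤ q → q ≤ r → (∀ i, (r i : ℕ∞) ≤ deg i) →
    Λ.comp (seg p q) (seg q r) = seg p r

namespace KPath

variable {k : ℕ} {Λ : KGraph k}

/-- `n ≤ d(x)`. -/
def DegLe (x : KPath Λ) (n : Fin k → ℕ) : Prop :=
  ∀ i, (n i : ℕ∞) ≤ x.deg i

private lemma enat_aux {n q : ℕ} {D : ℕ∞} (h1 : (n : ℕ∞) ≤ D)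
    (h2 : (q : ℕ∞) ≤ D - n) : ((n + q : ℕ) : ℕ∞) ≤ D := by
  induction D using ENat.recTopCoe with
  | top => exact le_top
  | coe dd =>
    rw [← ENat.coe_sub] at h2
    have h1' : n ≤ dd := by exact_mod_cast h1
    have h2' : q ≤ dd - n := by exact_mod_cast h2
    exact_mod_cast (by omega : n + q ≤ dd)

/-- The shift `σⁿ x`, defined when `n ≤ d(x)`. -/
def shift (x : KPath Λ) (n : Fin k → ℕ) (h : x.DegLe n) : KPath Λ where
  deg i := x.deg i - n i
  vert p := x.vert (n + p)
  seg p q := x.seg (n + p) (n + q)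
  r_seg p q hpq hq :=
    x.r_seg _ _ (add_le_add le_rfl hpq) (fun i => enat_aux (h i) (hq i))
  s_seg p q hpq hq :=
    x.s_seg _ _ (add_le_add le_rfl hpq) (fun i => enat_aux (h i) (hq i))
  d_seg p q hpq hq := by
    rw [x.d_seg _ _ (add_le_add le_rfl hpq) (fun i => enat_aux (h i) (hq i))]
    funext i
    simp only [Pi.sub_apply, Pi.add_apply]
    omega
  comp_seg p q r hpq hqr hr :=
    x.comp_seg _ _ _ (add_le_add le_rfl hpq) (add_le_add le_rfl hqr)
      (fun i => enat_aux (h i) (hr i))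

/-- `σᵐ x = σⁿ x` (in particular both shifts are defined). -/
def ShiftsEq (x : KPath Λ) (m n : Fin k → ℕ) : Prop :=
  ∃ (hm : x.DegLe m) (hn : x.DegLe n), x.shift m hm = x.shift n hn

/-- `x` is a boundary path: for all `n ≤ d(x)` and every finite exhaustive
`E ⊆ x(n)Λ` there is `λ ∈ E` with `x(n, n + d(λ)) = λ`. -/
def IsBoundary (x : KPath Λ) : Prop :=
  ∀ n : Fin k → ℕ, x.DegLe n →
    ∀ E : Set Λ.Mor, E.Finite → Λ.Exhaustive (x.vert n) E →
      ∃ lam ∈ E, x.DegLe (n + Λ.d lam) ∧ x.seg n (n + Λ.d lam) = lam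

/-- `y = λ x`: `y` is the extension of the path `x` by the morphism `λ`. -/
structure IsExtension (lam : Λ.Mor) (x y : KPath Λ) : Prop where
  deg_eq : y.deg = fun i => (Λ.d lam i : ℕ∞) + x.deg i
  seg_eq : y.seg 0 (Λ.d lam) = lam
  shift_eq : ∀ h : y.DegLe (Λ.d lam), y.shift (Λ.d lam) h = x

end KPath

namespace KGraph

variable {k : ℕ}

/-- `Λ` has no local periodicity (NLP). -/
def NLP (Λ : KGraph k) : Prop :=
  ∀ (v : Λ.Obj) (m n : Fin k → ℕ), m ≠ n →
    ∃ x : KPath Λ, x.IsBoundary ∧ x.vert 0 = v ∧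
      (¬ x.DegLe (m ⊔ n) ∨ ¬ x.ShiftsEq m n)

/-- `Λ` has strong no local periodicity (SNLP). -/
def SNLP (Λ : KGraph k) : Prop :=
  ∀ (v : Λ.Obj) (m n : Fin k → ℕ), m ≠ n →
    ∃ x : KPath Λ, x.IsBoundary ∧ x.vert 0 = v ∧
      x.DegLe (m ⊔ n) ∧ ¬ x.ShiftsEq m n

/-- `Λ` satisfies the aperiodicity condition at `v`. -/
def AperiodicAt (Λ : KGraph k) (v : Λ.Obj) : Prop :=
  ∃ x : KPath Λ, x.IsBoundary ∧ x.vert 0 = v ∧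
    ∀ (m n : Fin k → ℕ) (hm : x.DegLe m) (hn : x.DegLe n),
      x.shift m hm = x.shift n hn → m = n

/-- `Λ` satisfies the aperiodicity condition. -/
def Aperiodic (Λ : KGraph k) : Prop := ∀ v : Λ.Obj, Λ.AperiodicAt v

/-- `Λ` has local periodicity `n, m` at `v`. -/
def LocalPeriodicity (Λ : KGraph k) (v : Λ.Obj) (n m : Fin k → ℕ) : Prop :=
  ∀ x : KPath Λ, x.IsBoundary → x.vert 0 = v →
    x.DegLe (m ⊔ n) ∧ x.ShiftsEq n m

/-- Condition B of Farthing–Muhly–Yeend. -/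
def ConditionB (Λ : KGraph k) : Prop :=
  ∀ v : Λ.Obj, ∃ x : KPath Λ, x.IsBoundary ∧ x.vert 0 = v ∧
    ∀ (lam mu : Λ.Mor) (y₁ y₂ : KPath Λ), Λ.s lam = v → Λ.s mu = v → lam ≠ mu →
      KPath.IsExtension lam x y₁ → KPath.IsExtension mu x y₂ → y₁ ≠ y₂

/-- `H ⊆ Λ⁰` is hereditary. -/
def Hereditary (Λ : KGraph k) (H : Set Λ.Obj) : Prop :=
  ∀ lam : Λ.Mor, Λ.r lam ∈ H → Λ.s lam ∈ H

/-- `H ⊆ Λ⁰` is saturated. -/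
def Saturated (Λ : KGraph k) (H : Set Λ.Obj) : Prop :=
  ∀ (v : Λ.Obj) (F : Set Λ.Mor), F.Finite → Λ.Exhaustive v F →
    (∀ lam ∈ F, Λ.s lam ∈ H) → v ∈ H

/-- `Λ` is cofinal. -/
def Cofinal (Λ : KGraph k) : Prop :=
  ∀ v : Λ.Obj, ∃ (x : KPath Λ) (n : Fin k → ℕ), x.IsBoundary ∧ x.DegLe n ∧
    ∃ lam : Λ.Mor, Λ.r lam = v ∧ Λ.s lam = x.vert n

end KGraph

/-- Every common extension of `η` and `lam` factors through a minimal common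
extension. -/
lemma common_to_min {k : ℕ} (Λ : KGraph k) (η lam σ ρ : Λ.Mor)
    (hσ : Λ.s η = Λ.r σ) (hρ : Λ.s lam = Λ.r ρ)
    (heq : Λ.comp η σ = Λ.comp lam ρ) :
    ∃ α β σ', (α, β) ∈ Λ.MinExt η lam ∧ Λ.s α = Λ.r σ' ∧ Λ.comp α σ' = σ := by
  have hd : Λ.d η + Λ.d σ = Λ.d lam + Λ.d ρ := by
    rw [← Λ.d_comp η σ hσ, ← Λ.d_comp lam ρ hρ, heq]
  have hdi : ∀ i, Λ.d η i + Λ.d σ i = Λ.d lam i + Λ.d ρ i := fun i => by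
    have := congrFun hd i; simpa using this
  set N : Fin k → ℕ := fun i => Λ.d η i ⊔ Λ.d lam i with hN
  set n' : Fin k → ℕ := fun i => Λ.d η i + Λ.d σ i - N i with hn'
  -- factor σ
  obtain ⟨⟨α, σ'⟩, ⟨hαs, hαc, hαd, hσ'd⟩, -⟩ :=
    Λ.factor σ (fun i => N i - Λ.d η i) n'
      (by funext i; simp only [hN, hn', Pi.add_apply]; have := hdi i; omega)
  -- factor ρ
  obtain ⟨⟨β, ρ'⟩, ⟨hβs, hβc, hβd, hρ'd⟩, -⟩ :=
    Λ.factor ρ (fun i => N i - Λ.d lam i) n'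
      (by funext i; simp only [hN, hn', Pi.add_apply]; have := hdi i; omega)
  have hrα : Λ.s η = Λ.r α := by
    rw [hσ, ← hαc, Λ.r_comp α σ' hαs]
  have hrβ : Λ.s lam = Λ.r β := by
    rw [hρ, ← hβc, Λ.r_comp β ρ' hβs]
  -- uniqueness of the factorization of τ at (N, n')
  have hτd : Λ.d (Λ.comp η σ) = N + n' := by
    rw [Λ.d_comp η σ hσ]; funext i; simp only [hN, hn', Pi.add_apply]
    have := hdi i; omega
  obtain ⟨p, -, hpu⟩ := Λ.factor (Λ.comp η σ) N n' hτd
  have e1 : (Λ.comp η α, σ') = p := by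
    apply hpu
    refine ⟨by rw [Λ.s_comp η α hrα]; exact hαs, ?_, ?_, hσ'd⟩
    · rw [Λ.comp_assoc η α σ' hrα hαs, hαc]
    · rw [Λ.d_comp η α hrα]; funext i
      simp only [hN, Pi.add_apply]; rw [hαd]; simp only [hN]; omega
  have e2 : (Λ.comp lam β, ρ') = p := by
    apply hpu
    refine ⟨by rw [Λ.s_comp lam β hrβ]; exact hβs, ?_, ?_, hρ'd⟩
    · rw [Λ.comp_assoc lam β ρ' hrβ hβs, hβc, heq]
    · rw [Λ.d_comp lam β hrβ]; funext i
      simp only [hN, Pi.add_apply]; rw [hβd]; simp only [hN]; omega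
  have ecomp : Λ.comp η α = Λ.comp lam β := by
    have := e1.trans e2.symm
    exact (Prod.mk.injEq _ _ _ _ ▸ this).1
  refine ⟨α, β, σ', ⟨hrα, hrβ, ecomp, ?_⟩, hαs, hαc⟩
  rw [Λ.d_comp η α hrα]; funext i
  simp only [Pi.add_apply, Pi.sup_apply]
  rw [hαd]; simp only [hN]; omega

theorem stmt5 {k : ℕ} (Λ : KGraph k) (hFA : Λ.FinitelyAligned) (v : Λ.Obj)
    (F : Set Λ.Mor) (hFfin : F.Finite) (hFex : Λ.Exhaustive v F)
    (η : Λ.Mor) (hη : Λ.r η = v) :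
    (Λ.ExtSet η F).Finite ∧ Λ.Exhaustive (Λ.s η) (Λ.ExtSet η F) := by
  constructor
  · refine Set.Finite.biUnion hFfin (fun lam _ => ?_)
    refine ((hFA η lam).image Prod.fst).subset ?_
    rintro α ⟨β, h⟩
    exact ⟨(α, β), h, rfl⟩
  constructor
  · intro α hα
    simp only [KGraph.ExtSet, Set.mem_iUnion] at hα
    obtain ⟨lam, -, β, h1, -⟩ := hα
    exact h1.symm
  · intro μ hμ
    have hsη : Λ.s η = Λ.r μ := hμ.symm
    have hr : Λ.r (Λ.comp η μ) = v := by rw [Λ.r_comp η μ hsη, hη]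
    obtain ⟨lam, hlamF, ⟨⟨ζ, ξ⟩, hζs, hξs, hceq, -⟩⟩ := hFex.2 (Λ.comp η μ) hr
    have hξs' : Λ.s μ = Λ.r ξ := by rwa [Λ.s_comp η μ hsη] at hξs
    have heq : Λ.comp η (Λ.comp μ ξ) = Λ.comp lam ζ := by
      rw [← Λ.comp_assoc η μ ξ hsη hξs', hceq]
    have hrμξ : Λ.s η = Λ.r (Λ.comp μ ξ) := by
      rw [Λ.r_comp μ ξ hξs', hμ]
    obtain ⟨α, β, σ', hmem, hαs, hαc⟩ :=
      common_to_min Λ η lam (Λ.comp μ ξ) ζ hrμξ hζs heq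
    refine ⟨α, ?_, ?_⟩
    · simp only [KGraph.ExtSet, Set.mem_iUnion]
      exact ⟨lam, hlamF, β, hmem⟩
    · obtain ⟨α', β', -, hmem', -, -⟩ :=
        common_to_min Λ α μ σ' ξ hαs hξs' hαc
      exact ⟨(α', β'), hmem'⟩
end

section
/- Let Λ be a finitely-aligned k-graph without sources. If Λ has local periodicity n, m at a vertex v (i.e., every boundary path x with range v satisfies d(x) ≥ m ∨ n and σⁿx = σᵐx), and y is any boundary path with range x(n) for some infinite path x ∈ vΛ^∞ such that d(y) ≥ (m∨n − m) ∨ (m∨n − n), then σ^{m∨n−m} y = σ^{m∨n−n} y. -/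
section Helpers

namespace KGraph

variable {k : ℕ} {Λ : KGraph k}

lemma pair_unique {μ₁ ν₁ μ₂ ν₂ : Λ.Mor} (c₁ : Λ.s μ₁ = Λ.r ν₁) (c₂ : Λ.s μ₂ = Λ.r ν₂)
    (hcomp : Λ.comp μ₁ ν₁ = Λ.comp μ₂ ν₂) (hd : Λ.d μ₁ = Λ.d μ₂) :
    μ₁ = μ₂ ∧ ν₁ = ν₂ := by
  have hτ : Λ.d (Λ.comp μ₁ ν₁) = Λ.d μ₁ + Λ.d ν₁ := Λ.d_comp _ _ c₁
  have hd₂ : Λ.d ν₁ = Λ.d ν₂ := by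
    have h2 : Λ.d (Λ.comp μ₂ ν₂) = Λ.d μ₂ + Λ.d ν₂ := Λ.d_comp _ _ c₂
    rw [hcomp, h2, hd] at hτ
    funext i
    have := congrFun hτ i
    simp only [Pi.add_apply] at this
    omega
  obtain ⟨P, _, huniq⟩ := Λ.factor (Λ.comp μ₁ ν₁) (Λ.d μ₁) (Λ.d ν₁) hτ
  have e1 := huniq (μ₁, ν₁) ⟨c₁, rfl, rfl, rfl⟩
  have e2 := huniq (μ₂, ν₂) ⟨c₂, hcomp.symm, hd.symm, hd₂.symm⟩
  have := e1.trans e2.symm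
  exact ⟨congrArg Prod.fst this, congrArg Prod.snd this⟩

lemma exists_factor (τ : Λ.Mor) (a b : Fin k → ℕ) (h : Λ.d τ = a + b) :
    ∃ p q : Λ.Mor, Λ.s p = Λ.r q ∧ Λ.comp p q = τ ∧ Λ.d p = a ∧ Λ.d q = b := by
  obtain ⟨⟨p, q⟩, ⟨h1, h2, h3, h4⟩, -⟩ := Λ.factor τ a b h
  exact ⟨p, q, h1, h2, h3, h4⟩

lemma eq_ide_of_d_zero {μ : Λ.Mor} (h : Λ.d μ = 0) : μ = Λ.ide (Λ.r μ) := by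
  have hτ : Λ.d μ = 0 + Λ.d μ := by simp
  obtain ⟨P, _, huniq⟩ := Λ.factor μ 0 (Λ.d μ) hτ
  have e1 := huniq (Λ.ide (Λ.r μ), μ) ⟨by rw [Λ.s_ide], by rw [Λ.ide_comp], Λ.d_ide _, rfl⟩
  have e2 := huniq (μ, Λ.ide (Λ.s μ)) ⟨by rw [Λ.r_ide], by rw [Λ.comp_ide], h, by rw [Λ.d_ide, h]⟩
  have := congrArg Prod.fst (e1.trans e2.symm)
  exact this.symm

lemma s_eq_r_of_d_zero {μ : Λ.Mor} (h : Λ.d μ = 0) : Λ.s μ = Λ.r μ := by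
  conv_lhs => rw [eq_ide_of_d_zero h]
  rw [Λ.s_ide]

lemma prefix_of_two {τ ν ρ θ t : Λ.Mor} (c1 : Λ.s ν = Λ.r ρ) (h1 : Λ.comp ν ρ = τ)
    (c2 : Λ.s θ = Λ.r t) (h2 : Λ.comp θ t = τ) (hle : Λ.d ν ≤ Λ.d θ) :
    ∃ w : Λ.Mor, Λ.s ν = Λ.r w ∧ Λ.comp ν w = θ ∧ Λ.d w = Λ.d θ - Λ.d ν ∧
      Λ.s w = Λ.s θ ∧ ρ = Λ.comp w t := by
  have hθd : Λ.d θ = Λ.d ν + (Λ.d θ - Λ.d ν) := by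
    funext i; exact (Nat.add_sub_cancel' (hle i)).symm
  obtain ⟨ν', w, hc, hcomp, hd1, hd2⟩ := exists_factor θ _ _ hθd
  have hsw : Λ.s w = Λ.s θ := by rw [← hcomp, Λ.s_comp _ _ hc]
  have hswt : Λ.s w = Λ.r t := hsw.trans c2
  have hass : Λ.comp ν' (Λ.comp w t) = τ := by
    rw [← Λ.comp_assoc _ _ _ hc hswt, hcomp, h2]
  have hc' : Λ.s ν' = Λ.r (Λ.comp w t) := by rw [Λ.r_comp _ _ hswt]; exact hc
  obtain ⟨hν, hρ⟩ := pair_unique c1 hc' (h1.trans hass.symm) (hd1.symm)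
  subst hν
  exact ⟨w, hc, hcomp, hd2, hsw, hρ⟩

end KGraph

namespace KPath

variable {k : ℕ} {Λ : KGraph k}

lemma ext' {x y : KPath Λ} (h1 : x.deg = y.deg) (h2 : x.vert = y.vert)
    (h3 : x.seg = y.seg) : x = y := by
  cases x; cases y
  cases h1; cases h2; cases h3
  rfl

lemma DegLe.mono {x : KPath Λ} {a b : Fin k → ℕ} (hab : a ≤ b) (h : x.DegLe b) :
    x.DegLe a := fun i => le_trans (by exact_mod_cast Nat.cast_le.mpr (hab i)) (h i)

lemma shift_shift (w : KPath Λ) (a b : Fin k → ℕ) (ha : w.DegLe a)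
    (hb : (w.shift a ha).DegLe b) :
    ∃ hab : w.DegLe (a + b), (w.shift a ha).shift b hb = w.shift (a + b) hab := by
  refine ⟨fun i => enat_aux (ha i) (hb i), ?_⟩
  refine ext' ?_ ?_ ?_
  · funext i
    show w.deg i - a i - b i = w.deg i - ((a + b) i)
    rw [tsub_tsub]
    norm_cast
  · funext p
    show w.vert (a + (b + p)) = w.vert ((a + b) + p)
    rw [add_assoc]
  · funext p q
    show w.seg (a + (b + p)) (a + (b + q)) = w.seg ((a + b) + p) ((a + b) + q)
    rw [add_assoc, add_assoc]

lemma shift_eq_of_eq {x w : KPath Λ} (h : x = w) (a : Fin k → ℕ) (hx : x.DegLe a) :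
    ∃ hw : w.DegLe a, x.shift a hx = w.shift a hw := by
  subst h; exact ⟨hx, rfl⟩

lemma shift_congr_arg (w : KPath Λ) {a b : Fin k → ℕ} (hab : a = b) (ha : w.DegLe a)
    (hb : w.DegLe b) : w.shift a ha = w.shift b hb := by
  subst hab; rfl

end KPath

end Helpers
section ZConstruction

open KGraph

variable {k : ℕ} {Λ : KGraph k} (x y : KPath Λ) (n : Fin k → ℕ)

private lemma enat_sub_le {a b : ℕ} {D : ℕ∞} (h : (a : ℕ∞) ≤ (b : ℕ∞) + D) :
    ((a - b : ℕ) : ℕ∞) ≤ D := by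
  induction D using ENat.recTopCoe with
  | top => exact le_top
  | coe dd =>
    rw [← Nat.cast_add] at h
    have h' : a ≤ b + dd := by exact_mod_cast h
    exact_mod_cast (by omega : a - b ≤ dd)

private lemma enat_le_of_le {a b : ℕ} {D : ℕ∞} (hab : a ≤ b) (h : (b : ℕ∞) ≤ D) :
    (a : ℕ∞) ≤ D := le_trans (by exact_mod_cast hab) h

/-- validity of an index for the concatenated path -/
def ZValid (q : Fin k → ℕ) : Prop := ∀ i, (q i : ℕ∞) ≤ (n i : ℕ∞) + y.deg i

/-- the big rectangle morphism -/
def Bmor (p q : Fin k → ℕ) : Λ.Mor :=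
  Λ.comp (x.seg (p ⊓ n) n) (y.seg 0 (q - n))

/-- `μ` is the middle factor of the rectangle `B p q`. -/
def IsMid (p q : Fin k → ℕ) (μ : Λ.Mor) : Prop :=
  ∃ a c : Λ.Mor, Λ.s a = Λ.r μ ∧ Λ.s μ = Λ.r c ∧
    Λ.comp a (Λ.comp μ c) = Bmor x y n p q ∧
    Λ.d a = p - p ⊓ n ∧ Λ.d μ = q - p ∧ Λ.d c = (q ⊔ n) - q

variable (hx : ∀ i, x.deg i = ⊤) (hyr : y.vert 0 = x.vert n)

include hx in
lemma xvalid (q : Fin k → ℕ) : ∀ i, (q i : ℕ∞) ≤ x.deg i := fun i => by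
  rw [hx i]; exact le_top

lemma yvalid {q : Fin k → ℕ} (hq : ZValid y n q) : ∀ i, ((q - n) i : ℕ∞) ≤ y.deg i :=
  fun i => enat_sub_le (hq i)

include hx hyr

lemma compat_B {q : Fin k → ℕ} (hq : ZValid y n q) (p : Fin k → ℕ) :
    Λ.s (x.seg (p ⊓ n) n) = Λ.r (y.seg 0 (q - n)) := by
  rw [x.s_seg _ _ inf_le_right (xvalid x hx n), y.r_seg _ _ (by intro i; simp) (yvalid y n hq), hyr]

lemma r_B {q : Fin k → ℕ} (hq : ZValid y n q) (p : Fin k → ℕ) :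
    Λ.r (Bmor x y n p q) = x.vert (p ⊓ n) := by
  rw [Bmor, Λ.r_comp _ _ (compat_B x y n hx hyr hq p), x.r_seg _ _ inf_le_right (xvalid x hx n)]

lemma s_B {q : Fin k → ℕ} (hq : ZValid y n q) (p : Fin k → ℕ) :
    Λ.s (Bmor x y n p q) = y.vert (q - n) := by
  rw [Bmor, Λ.s_comp _ _ (compat_B x y n hx hyr hq p), y.s_seg _ _ (by intro i; simp) (yvalid y n hq)]

lemma d_B {p q : Fin k → ℕ} (hpq : p ≤ q) (hq : ZValid y n q) :
    Λ.d (Bmor x y n p q) = (p - p ⊓ n) + ((q - p) + ((q ⊔ n) - q)) := by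
  rw [Bmor, Λ.d_comp _ _ (compat_B x y n hx hyr hq p),
    x.d_seg _ _ inf_le_right (xvalid x hx n),
    y.d_seg _ _ (by intro i; simp) (yvalid y n hq)]
  funext i
  have h : p i ≤ q i := hpq i
  simp only [Pi.add_apply, Pi.sub_apply, Pi.inf_apply, Pi.sup_apply, Pi.zero_apply]
  omega

lemma mid_exists {p q : Fin k → ℕ} (hpq : p ≤ q) (hq : ZValid y n q) :
    ∃ μ : Λ.Mor, IsMid x y n p q μ := by
  obtain ⟨a, rest, hc1, hcomp1, hd1, hd2⟩ :=
    exists_factor (Bmor x y n p q) (p - p ⊓ n) ((q - p) + ((q ⊔ n) - q)) (d_B x y n hx hyr hpq hq)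
  obtain ⟨μ, c, hc2, hcomp2, hd3, hd4⟩ := exists_factor rest (q - p) ((q ⊔ n) - q) hd2
  refine ⟨μ, a, c, ?_, hc2, ?_, hd1, hd3, hd4⟩
  · rw [← hcomp2, Λ.r_comp _ _ hc2] at hc1; exact hc1
  · rw [hcomp2, hcomp1]

omit hx hyr in
lemma mid_unique {p q : Fin k → ℕ} {μ μ' : Λ.Mor}
    (h : IsMid x y n p q μ) (h' : IsMid x y n p q μ') : μ = μ' := by
  obtain ⟨a, c, hc1, hc2, hcomp, hda, hdμ, hdc⟩ := h
  obtain ⟨a', c', hc1', hc2', hcomp', hda', hdμ', hdc'⟩ := h'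
  have hr : Λ.s a = Λ.r (Λ.comp μ c) := by rw [Λ.r_comp _ _ hc2]; exact hc1
  have hr' : Λ.s a' = Λ.r (Λ.comp μ' c') := by rw [Λ.r_comp _ _ hc2']; exact hc1'
  obtain ⟨-, h2⟩ := pair_unique hr hr' (hcomp.trans hcomp'.symm) (hda.trans hda'.symm)
  exact (pair_unique hc2 hc2' h2 (hdμ.trans hdμ'.symm)).1

open Classical in
/-- segments of the concatenated path -/
noncomputable def zseg (p q : Fin k → ℕ) : Λ.Mor :=
  if n ≤ p then y.seg (p - n) (q - n)
  else if h : p ≤ q ∧ ZValid y n q then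
    (mid_exists x y n hx hyr h.1 h.2).choose
  else Λ.ide (y.vert 0)

open Classical in
/-- vertices of the concatenated path -/
noncomputable def zvert (p : Fin k → ℕ) : Λ.Obj :=
  if n ≤ p then y.vert (p - n) else Λ.r (zseg x y n hx hyr p p)

lemma zseg_of_ge {p : Fin k → ℕ} (hp : n ≤ p) (q : Fin k → ℕ) :
    zseg x y n hx hyr p q = y.seg (p - n) (q - n) := by
  rw [zseg, if_pos hp]

lemma zvert_of_ge {p : Fin k → ℕ} (hp : n ≤ p) :
    zvert x y n hx hyr p = y.vert (p - n) := by
  rw [zvert, if_pos hp]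

lemma zseg_spec {p q : Fin k → ℕ} (hpq : p ≤ q) (hq : ZValid y n q) :
    IsMid x y n p q (zseg x y n hx hyr p q) := by
  rw [zseg]
  by_cases hp : n ≤ p
  · rw [if_pos hp]
    have hpn : p ⊓ n = n := inf_eq_right.mpr hp
    have hB : Bmor x y n p q = y.seg 0 (q - n) := by
      rw [Bmor, hpn]
      have h0 : x.seg n n = Λ.ide (Λ.r (x.seg n n)) :=
        eq_ide_of_d_zero (by rw [x.d_seg _ _ le_rfl (xvalid x hx n)]; simp)
      rw [h0, x.r_seg _ _ le_rfl (xvalid x hx n), ← hyr,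
        ← y.r_seg 0 (q - n) (by intro i; simp) (yvalid y n hq), Λ.ide_comp]
    have hsub : p - n ≤ q - n := fun i => by
      simp only [Pi.sub_apply]; exact Nat.sub_le_sub_right (hpq i) _
    have hpval : ∀ i, ((p - n) i : ℕ∞) ≤ y.deg i := fun i =>
      enat_le_of_le (hsub i) (yvalid y n hq i)
    refine ⟨y.seg 0 (p - n), Λ.ide (y.vert (q - n)), ?_, ?_, ?_, ?_, ?_, ?_⟩
    · rw [y.s_seg _ _ (by intro i; simp) hpval, y.r_seg _ _ hsub (yvalid y n hq)]
    · rw [y.s_seg _ _ hsub (yvalid y n hq), Λ.r_ide]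
    · rw [hB]
      have hs : Λ.s (y.seg (p - n) (q - n)) = y.vert (q - n) := y.s_seg _ _ hsub (yvalid y n hq)
      rw [← hs, Λ.comp_ide, y.comp_seg 0 (p - n) (q - n) (by intro i; simp) hsub (yvalid y n hq)]
    · rw [y.d_seg _ _ (by intro i; simp) hpval]
      rw [hpn]
      funext i
      have h1 : n i ≤ p i := hp i
      simp
    · rw [y.d_seg _ _ hsub (yvalid y n hq)]
      funext i
      have h1 : n i ≤ p i := hp i
      have h2 : p i ≤ q i := hpq i
      simp only [Pi.sub_apply]
      omega
    · rw [Λ.d_ide]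
      funext i
      have h1 : n i ≤ p i := hp i
      have h2 : p i ≤ q i := hpq i
      simp only [Pi.zero_apply, Pi.sub_apply, Pi.sup_apply]
      omega
  · rw [if_neg hp, dif_pos ⟨hpq, hq⟩]
    exact (mid_exists x y n hx hyr hpq hq).choose_spec

end ZConstruction
section ZStruct

open KGraph

variable {k : ℕ} {Λ : KGraph k} (x y : KPath Λ) (n : Fin k → ℕ)
variable (hx : ∀ i, x.deg i = ⊤) (hyr : y.vert 0 = x.vert n)

lemma zvalid_mono {p q : Fin k → ℕ} (hpq : p ≤ q) (hq : ZValid y n q) : ZValid y n p :=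
  fun i => le_trans (by exact_mod_cast Nat.cast_le.mpr (hpq i)) (hq i)

lemma ysub_mono {p q : Fin k → ℕ} (hpq : p ≤ q) : p - n ≤ q - n := fun i => by
  simp only [Pi.sub_apply]; exact Nat.sub_le_sub_right (hpq i) _

include hx hyr

lemma zB_R1 (p : Fin k → ℕ) {q r : Fin k → ℕ} (hqr : q ≤ r) (hr : ZValid y n r) :
    Bmor x y n p r = Λ.comp (Bmor x y n p q) (y.seg (q - n) (r - n)) := by
  have hq : ZValid y n q := zvalid_mono y n hqr hr
  have c1 : Λ.s (x.seg (p ⊓ n) n) = Λ.r (y.seg 0 (q - n)) := compat_B x y n hx hyr hq p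
  have c2 : Λ.s (y.seg 0 (q - n)) = Λ.r (y.seg (q - n) (r - n)) := by
    rw [y.s_seg _ _ (by intro i; simp) (yvalid y n hq),
      y.r_seg _ _ (ysub_mono n hqr) (yvalid y n hr)]
  rw [Bmor, Bmor, Λ.comp_assoc _ _ _ c1 c2,
    y.comp_seg 0 (q - n) (r - n) (by intro i; simp) (ysub_mono n hqr) (yvalid y n hr)]

lemma zB_R2 {p q r : Fin k → ℕ} (hpq : p ≤ q) (hqr : q ≤ r) (hr : ZValid y n r) :
    Bmor x y n p r = Λ.comp (x.seg (p ⊓ n) (q ⊓ n)) (Bmor x y n q r) := by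
  have hinf : p ⊓ n ≤ q ⊓ n := inf_le_inf_right n hpq
  have c1 : Λ.s (x.seg (p ⊓ n) (q ⊓ n)) = Λ.r (x.seg (q ⊓ n) n) := by
    rw [x.s_seg _ _ hinf (xvalid x hx _), x.r_seg _ _ inf_le_right (xvalid x hx n)]
  have c2 : Λ.s (x.seg (q ⊓ n) n) = Λ.r (y.seg 0 (r - n)) := compat_B x y n hx hyr hr q
  rw [Bmor, Bmor, ← Λ.comp_assoc _ _ _ c1 c2,
    x.comp_seg (p ⊓ n) (q ⊓ n) n hinf inf_le_right (xvalid x hx n)]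

lemma zd_seg {p q : Fin k → ℕ} (hpq : p ≤ q) (hq : ZValid y n q) :
    Λ.d (zseg x y n hx hyr p q) = q - p :=
  (zseg_spec x y n hx hyr hpq hq).choose_spec.choose_spec.2.2.2.2.1

lemma zr_seg' {p q : Fin k → ℕ} (hpq : p ≤ q) (hq : ZValid y n q) :
    Λ.r (zseg x y n hx hyr p q) = Λ.r (zseg x y n hx hyr p p) := by
  have hp : ZValid y n p := zvalid_mono y n hpq hq
  obtain ⟨a, c, hc1, hc2, hcomp, hda, hdμ, hdc⟩ := zseg_spec x y n hx hyr hpq hq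
  obtain ⟨a₀, c₀, hc1₀, hc2₀, hcomp₀, hda₀, hdμ₀, hdc₀⟩ := zseg_spec x y n hx hyr (le_refl p) hp
  set μ := zseg x y n hx hyr p q
  set μ₀ := zseg x y n hx hyr p p
  set Y := y.seg (p - n) (q - n) with hY
  have hsc₀ : Λ.s c₀ = Λ.r Y := by
    have h1 : Λ.s (Bmor x y n p p) = y.vert (p - n) := s_B x y n hx hyr hp p
    rw [← hcomp₀, Λ.s_comp _ _ (by rw [Λ.r_comp _ _ hc2₀]; exact hc1₀),
      Λ.s_comp _ _ hc2₀] at h1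
    rw [h1, hY, y.r_seg _ _ (ysub_mono n hpq) (yvalid y n hq)]
  have hR1 : Λ.comp a (Λ.comp μ c) =
      Λ.comp a₀ (Λ.comp (Λ.comp μ₀ c₀) Y) := by
    rw [hcomp, zB_R1 x y n hx hyr p hpq hq, ← hcomp₀,
      Λ.comp_assoc _ _ _ (by rw [Λ.r_comp _ _ hc2₀]; exact hc1₀)
        (by rw [Λ.s_comp _ _ hc2₀]; exact hsc₀)]
  have hca : Λ.s a = Λ.r (Λ.comp μ c) := by rw [Λ.r_comp _ _ hc2]; exact hc1
  have hca₀ : Λ.s a₀ = Λ.r (Λ.comp (Λ.comp μ₀ c₀) Y) := by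
    rw [Λ.r_comp _ _ (by rw [Λ.s_comp _ _ hc2₀]; exact hsc₀), Λ.r_comp _ _ hc2₀]
    exact hc1₀
  obtain ⟨-, h2⟩ := pair_unique hca hca₀ hR1 (hda.trans hda₀.symm)
  have := congrArg Λ.r h2
  rwa [Λ.r_comp _ _ hc2, Λ.r_comp _ _ (by rw [Λ.s_comp _ _ hc2₀]; exact hsc₀),
    Λ.r_comp _ _ hc2₀] at this

lemma zs_seg' {p q : Fin k → ℕ} (hpq : p ≤ q) (hq : ZValid y n q) :
    Λ.s (zseg x y n hx hyr p q) = Λ.r (zseg x y n hx hyr q q) := by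
  obtain ⟨a, c, hc1, hc2, hcomp, hda, hdμ, hdc⟩ := zseg_spec x y n hx hyr hpq hq
  obtain ⟨a₂, c₂, hc1₂, hc2₂, hcomp₂, hda₂, hdμ₂, hdc₂⟩ := zseg_spec x y n hx hyr (le_refl q) hq
  set μ := zseg x y n hx hyr p q
  set μ₂ := zseg x y n hx hyr q q
  set xP := x.seg (p ⊓ n) (q ⊓ n) with hxP
  have hsxP : Λ.s xP = Λ.r a₂ := by
    have h1 : Λ.r (Bmor x y n q q) = x.vert (q ⊓ n) := r_B x y n hx hyr hq q
    rw [← hcomp₂, Λ.r_comp _ _ (by rw [Λ.r_comp _ _ hc2₂]; exact hc1₂)] at h1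
    rw [hxP, x.s_seg _ _ (inf_le_inf_right n hpq) (xvalid x hx _), h1]
  have hR2 : Λ.comp (Λ.comp a μ) c =
      Λ.comp (Λ.comp xP a₂) (Λ.comp μ₂ c₂) := by
    rw [Λ.comp_assoc _ _ _ hc1 hc2, hcomp, zB_R2 x y n hx hyr hpq (le_refl q) hq, ← hcomp₂,
      ← Λ.comp_assoc _ _ _ hsxP (by rw [Λ.r_comp _ _ hc2₂]; exact hc1₂)]
  have hca : Λ.s (Λ.comp a μ) = Λ.r c := by rw [Λ.s_comp _ _ hc1]; exact hc2
  have hca₂ : Λ.s (Λ.comp xP a₂) = Λ.r (Λ.comp μ₂ c₂) := by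
    rw [Λ.s_comp _ _ hsxP, Λ.r_comp _ _ hc2₂]; exact hc1₂
  have hdeq : Λ.d (Λ.comp a μ) = Λ.d (Λ.comp xP a₂) := by
    rw [Λ.d_comp _ _ hc1, Λ.d_comp _ _ hsxP, hda, hdμ, hda₂, hxP,
      x.d_seg _ _ (inf_le_inf_right n hpq) (xvalid x hx _)]
    funext i
    have h1 : p i ≤ q i := hpq i
    simp only [Pi.add_apply, Pi.sub_apply, Pi.inf_apply]
    omega
  obtain ⟨-, h2⟩ := pair_unique hca hca₂ hR2 hdeq
  rw [hc2, h2, Λ.r_comp _ _ hc2₂]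

lemma zcomp_seg {p q r : Fin k → ℕ} (hpq : p ≤ q) (hqr : q ≤ r) (hr : ZValid y n r) :
    Λ.comp (zseg x y n hx hyr p q) (zseg x y n hx hyr q r) = zseg x y n hx hyr p r := by
  have hq : ZValid y n q := zvalid_mono y n hqr hr
  have hpr : p ≤ r := le_trans hpq hqr
  obtain ⟨a₁, c₁, hc1₁, hc2₁, hcomp₁, hda₁, hdμ₁, hdc₁⟩ := zseg_spec x y n hx hyr hpq hq
  obtain ⟨a₂, c₂, hc1₂, hc2₂, hcomp₂, hda₂, hdμ₂, hdc₂⟩ := zseg_spec x y n hx hyr hqr hr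
  set μ₁ := zseg x y n hx hyr p q
  set μ₂ := zseg x y n hx hyr q r
  set Y := y.seg (q - n) (r - n) with hY
  set xP := x.seg (p ⊓ n) (q ⊓ n) with hxP
  -- compat facts
  have hsc₁ : Λ.s c₁ = Λ.r Y := by
    have h1 : Λ.s (Bmor x y n p q) = y.vert (q - n) := s_B x y n hx hyr hq p
    rw [← hcomp₁, Λ.s_comp _ _ (by rw [Λ.r_comp _ _ hc2₁]; exact hc1₁),
      Λ.s_comp _ _ hc2₁] at h1
    rw [h1, hY, y.r_seg _ _ (ysub_mono n hqr) (yvalid y n hr)]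
  have hsxP : Λ.s xP = Λ.r a₂ := by
    have h1 : Λ.r (Bmor x y n q r) = x.vert (q ⊓ n) := r_B x y n hx hyr hr q
    rw [← hcomp₂, Λ.r_comp _ _ (by rw [Λ.r_comp _ _ hc2₂]; exact hc1₂)] at h1
    rw [hxP, x.s_seg _ _ (inf_le_inf_right n hpq) (xvalid x hx _), h1]
  -- identity 1 : Bpr = (a₁ μ₁) (c₁ Y)
  have hid1 : Bmor x y n p r = Λ.comp (Λ.comp a₁ μ₁) (Λ.comp c₁ Y) := by
    rw [zB_R1 x y n hx hyr p hqr hr, ← hcomp₁,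
      Λ.comp_assoc _ _ _ (by rw [Λ.r_comp _ _ hc2₁]; exact hc1₁)
        (by rw [Λ.s_comp _ _ hc2₁]; exact hsc₁),
      Λ.comp_assoc _ _ _ hc2₁ hsc₁,
      ← Λ.comp_assoc _ _ _ hc1₁ (by rw [Λ.r_comp _ _ hsc₁]; exact hc2₁)]
  -- identity 2 : Bpr = (xP a₂) (μ₂ c₂)
  have hid2 : Bmor x y n p r = Λ.comp (Λ.comp xP a₂) (Λ.comp μ₂ c₂) := by
    rw [zB_R2 x y n hx hyr hpq hqr hr, ← hcomp₂,
      ← Λ.comp_assoc _ _ _ hsxP (by rw [Λ.r_comp _ _ hc2₂]; exact hc1₂)]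
  have hcL : Λ.s (Λ.comp a₁ μ₁) = Λ.r (Λ.comp c₁ Y) := by
    rw [Λ.s_comp _ _ hc1₁, Λ.r_comp _ _ hsc₁]; exact hc2₁
  have hcR : Λ.s (Λ.comp xP a₂) = Λ.r (Λ.comp μ₂ c₂) := by
    rw [Λ.s_comp _ _ hsxP, Λ.r_comp _ _ hc2₂]; exact hc1₂
  have hdeq : Λ.d (Λ.comp a₁ μ₁) = Λ.d (Λ.comp xP a₂) := by
    rw [Λ.d_comp _ _ hc1₁, Λ.d_comp _ _ hsxP, hda₁, hdμ₁, hda₂, hxP,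
      x.d_seg _ _ (inf_le_inf_right n hpq) (xvalid x hx _)]
    funext i
    have h1 : p i ≤ q i := hpq i
    simp only [Pi.add_apply, Pi.sub_apply, Pi.inf_apply]
    omega
  obtain ⟨-, hmid⟩ := pair_unique hcL hcR (hid1.symm.trans hid2) hdeq
  -- hence Bpr = a₁ (μ₁ (μ₂ c₂)) = a₁ ((μ₁ μ₂) c₂)
  have hsμ₁ : Λ.s μ₁ = Λ.r μ₂ := by
    rw [zs_seg' x y n hx hyr hpq hq, ← zr_seg' x y n hx hyr hqr hr]
  have hid3 : Bmor x y n p r = Λ.comp a₁ (Λ.comp (Λ.comp μ₁ μ₂) c₂) := by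
    rw [hid1, Λ.comp_assoc _ _ _ hc1₁ (by rw [Λ.r_comp _ _ hsc₁]; exact hc2₁), hmid,
      ← Λ.comp_assoc _ _ _ hsμ₁ hc2₂]
  -- (μ₁ μ₂) is a middle factor of Bpr
  have hmid' : IsMid x y n p r (Λ.comp μ₁ μ₂) := by
    refine ⟨a₁, c₂, ?_, ?_, hid3.symm, ?_, ?_, hdc₂⟩
    · rw [Λ.r_comp _ _ hsμ₁]; exact hc1₁
    · rw [Λ.s_comp _ _ hsμ₁]; exact hc2₂
    · exact hda₁
    · rw [Λ.d_comp _ _ hsμ₁, hdμ₁, hdμ₂]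
      funext i
      have h1 : p i ≤ q i := hpq i
      have h2 : q i ≤ r i := hqr i
      simp only [Pi.add_apply, Pi.sub_apply]
      omega
  exact mid_unique x y n hmid' (zseg_spec x y n hx hyr hpr hr)

end ZStruct
section ZPath

open KGraph

variable {k : ℕ} {Λ : KGraph k} (x y : KPath Λ) (n : Fin k → ℕ)
variable (hx : ∀ i, x.deg i = ⊤) (hyr : y.vert 0 = x.vert n)

include hx hyr in
lemma zvert_eq_r {p : Fin k → ℕ} (hp : ZValid y n p) :
    zvert x y n hx hyr p = Λ.r (zseg x y n hx hyr p p) := by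
  rw [zvert]
  by_cases h : n ≤ p
  · rw [if_pos h, zseg_of_ge x y n hx hyr h,
      y.r_seg _ _ le_rfl (yvalid y n hp)]
  · rw [if_neg h]

/-- the concatenated path `z = x(0,n) y` -/
noncomputable def zpath : KPath Λ where
  deg i := (n i : ℕ∞) + y.deg i
  vert := zvert x y n hx hyr
  seg := zseg x y n hx hyr
  r_seg p q hpq hq :=
    (zr_seg' x y n hx hyr hpq hq).trans (zvert_eq_r x y n hx hyr (zvalid_mono y n hpq hq)).symm
  s_seg p q hpq hq :=
    (zs_seg' x y n hx hyr hpq hq).trans (zvert_eq_r x y n hx hyr hq).symm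
  d_seg p q hpq hq := zd_seg x y n hx hyr hpq hq
  comp_seg p q r hpq hqr hr := zcomp_seg x y n hx hyr hpq hqr hr

include hx hyr

lemma zpath_vert0 : (zpath x y n hx hyr).vert 0 = x.vert 0 := by
  show zvert x y n hx hyr 0 = x.vert 0
  have h0 : ZValid y n 0 := by intro i; simp
  by_cases h : n ≤ 0
  · have hn0 : n = 0 := le_antisymm h (by intro i; simp)
    rw [zvert_of_ge x y n hx hyr h]
    have h2 : (0 : Fin k → ℕ) - n = 0 := by funext i; simp
    rw [h2, hyr, hn0]
  · rw [zvert, if_neg h]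
    obtain ⟨a, c, hc1, hc2, hcomp, hda, hdμ, hdc⟩ := zseg_spec x y n hx hyr (le_refl 0) h0
    have hda0 : Λ.d a = 0 := by
      rw [hda]; funext i; simp
    have hra : Λ.r a = x.vert 0 := by
      have h1 : Λ.r (Bmor x y n 0 0) = x.vert (0 ⊓ n) := r_B x y n hx hyr h0 0
      rw [← hcomp, Λ.r_comp _ _ (by rw [Λ.r_comp _ _ hc2]; exact hc1)] at h1
      rw [h1]
      congr 1
    rw [← hc1, s_eq_r_of_d_zero hda0, hra]

lemma zpath_shift_n (h : (zpath x y n hx hyr).DegLe n) :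
    (zpath x y n hx hyr).shift n h = y := by
  refine KPath.ext' ?_ ?_ ?_
  · funext i
    show ((n i : ℕ∞) + y.deg i) - (n i : ℕ∞) = y.deg i
    induction (y.deg i) using ENat.recTopCoe with
    | top => simp
    | coe dd =>
      rw [← Nat.cast_add, ← ENat.coe_sub]
      norm_cast
      omega
  · funext p
    show zvert x y n hx hyr (n + p) = y.vert p
    rw [zvert_of_ge x y n hx hyr (by intro i; simp)]
    congr 1
    funext i; simp
  · funext p q
    show zseg x y n hx hyr (n + p) (n + q) = y.seg p q
    rw [zseg_of_ge x y n hx hyr (by intro i; simp)]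
    congr 1 <;> · funext i; simp

end ZPath
section ZBoundary

open KGraph

variable {k : ℕ} {Λ : KGraph k} (x y : KPath Λ) (n : Fin k → ℕ)
variable (hx : ∀ i, x.deg i = ⊤) (hyr : y.vert 0 = x.vert n)

include hx hyr in
lemma zpath_boundary (hyb : y.IsBoundary) (hFA : Λ.FinitelyAligned) :
    (zpath x y n hx hyr).IsBoundary := by
  intro p hp E hE hEx
  set z := zpath x y n hx hyr with hz
  have hpv : ZValid y n p := fun i => hp i
  set s' : Fin k → ℕ := p ⊔ n with hs'
  have hs'v : ZValid y n s' := by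
    intro i
    show ((max (p i) (n i) : ℕ) : ℕ∞) ≤ (n i : ℕ∞) + y.deg i
    rcases le_total (p i) (n i) with h | h
    · rw [Nat.max_eq_right h]; exact le_self_add
    · rw [Nat.max_eq_left h]; exact hpv i
  have hps' : p ≤ s' := le_sup_left
  have hns' : n ≤ s' := le_sup_right
  set η := z.seg p s' with hη
  set P : Fin k → ℕ := p - n with hP
  have hPy : y.DegLe P := fun i => enat_sub_le (hpv i)
  have hs'subn : s' - n = P := by
    funext i; simp only [hs', hP, Pi.sub_apply, Pi.sup_apply]; omega
  have hrη : Λ.r η = z.vert p := z.r_seg p s' hps' hs'v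
  have hsη : Λ.s η = y.vert P := by
    rw [hη, z.s_seg p s' hps' hs'v]
    show zvert x y n hx hyr s' = y.vert P
    rw [zvert_of_ge x y n hx hyr hns', hs'subn]
  have hdη : Λ.d η = s' - p := z.d_seg p s' hps' hs'v
  set F := Λ.ExtSet η E with hF
  have hFfin : F.Finite := by
    refine Set.Finite.biUnion hE (fun lam _ => ?_)
    exact ((hFA η lam).image Prod.fst).subset (fun α ⟨β, hβ⟩ => ⟨(α, β), hβ, rfl⟩)
  have hmemF : ∀ α ∈ F, ∃ lam ∈ E, ∃ β, (α, β) ∈ Λ.MinExt η lam := by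
    intro α hα
    simp only [hF, KGraph.ExtSet, Set.mem_iUnion, Set.mem_setOf_eq] at hα
    obtain ⟨lam, hlam, β, hβ⟩ := hα
    exact ⟨lam, hlam, β, hβ⟩
  have hFr : ∀ α ∈ F, Λ.r α = y.vert P := by
    intro α hα
    obtain ⟨lam, _, β, hmin⟩ := hmemF α hα
    rw [← hmin.1]; exact hsη
  have hFex : ∀ μ : Λ.Mor, Λ.r μ = y.vert P → ∃ α ∈ F, (Λ.MinExt α μ).Nonempty := by
    intro μ hμ
    have hc_ημ : Λ.s η = Λ.r μ := hsη.trans hμ.symm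
    have hrτ₀ : Λ.r (Λ.comp η μ) = z.vert p := by rw [Λ.r_comp _ _ hc_ημ, hrη]
    obtain ⟨lam, hlamE, ⟨g, h'⟩, hgmem⟩ := hEx.2 (Λ.comp η μ) hrτ₀
    simp only [KGraph.MinExt, Set.mem_setOf_eq] at hgmem
    obtain ⟨hg1, hg2, hg3, hg4⟩ := hgmem
    set τ := Λ.comp lam g with hτ
    have hsμh : Λ.s μ = Λ.r h' := by rw [← Λ.s_comp _ _ hc_ημ]; exact hg2
    have hτalt : Λ.comp η (Λ.comp μ h') = τ := by
      rw [← Λ.comp_assoc _ _ _ hc_ημ hsμh]; exact hg3.symm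
    have hcμh : Λ.s η = Λ.r (Λ.comp μ h') := by rw [Λ.r_comp _ _ hsμh]; exact hc_ημ
    have hdτ : Λ.d τ = Λ.d lam ⊔ (Λ.d η + Λ.d μ) := by
      rw [hτ, hg4, Λ.d_comp _ _ hc_ημ]
    have hcle : Λ.d η ⊔ Λ.d lam ≤ Λ.d τ := by
      intro i
      have h1 := congrFun hdτ i
      simp only [Pi.sup_apply, Pi.add_apply] at h1 ⊢
      omega
    have hsplit : Λ.d τ = (Λ.d η ⊔ Λ.d lam) + (Λ.d τ - (Λ.d η ⊔ Λ.d lam)) := by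
      funext i
      have h1 : (Λ.d η ⊔ Λ.d lam) i ≤ Λ.d τ i := hcle i
      simp only [Pi.add_apply, Pi.sub_apply, Pi.sup_apply] at h1 ⊢
      omega
    obtain ⟨τ₁, τ₂, hcτ, hτ12, hdτ₁, hdτ₂⟩ := KGraph.exists_factor τ _ _ hsplit
    have hηle : Λ.d η ≤ Λ.d τ₁ := by rw [hdτ₁]; exact le_sup_left
    obtain ⟨α, hcα, hηα, hdα, hsα, hμh'⟩ :=
      KGraph.prefix_of_two hcμh hτalt hcτ hτ12 hηle
    have hlamle : Λ.d lam ≤ Λ.d τ₁ := by rw [hdτ₁]; exact le_sup_right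
    obtain ⟨β, hcβ, hlamβ, hdβ, hsβ, -⟩ :=
      KGraph.prefix_of_two hg1 hτ.symm hcτ hτ12 hlamle
    have hdηα : Λ.d (Λ.comp η α) = Λ.d η ⊔ Λ.d lam := by
      rw [Λ.d_comp _ _ hcα, hdα, hdτ₁]
      funext i; simp only [Pi.add_apply, Pi.sub_apply, Pi.sup_apply]; omega
    have hαF : α ∈ F := by
      simp only [hF, KGraph.ExtSet, Set.mem_iUnion, Set.mem_setOf_eq]
      exact ⟨lam, hlamE, β, hcα, hcβ, by rw [hηα, hlamβ], hdηα⟩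
    have hcατ₂ : Λ.s α = Λ.r τ₂ := by rw [hsα]; exact hcτ
    have hdτ'c : Λ.d (Λ.comp α τ₂) = Λ.d α + Λ.d τ₂ := Λ.d_comp _ _ hcατ₂
    have hc'le : Λ.d α ⊔ Λ.d μ ≤ Λ.d (Λ.comp α τ₂) := by
      intro i
      have h1 := congrFun hdτ'c i
      have h2 := congrFun hdα i
      have h3 := congrFun hdτ₂ i
      have h4 := congrFun hdτ₁ i
      have h5 := congrFun hdτ i
      simp only [Pi.add_apply, Pi.sub_apply, Pi.sup_apply] at h1 h2 h3 h4 h5 ⊢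
      omega
    have hsplit' : Λ.d (Λ.comp α τ₂) =
        (Λ.d α ⊔ Λ.d μ) + (Λ.d (Λ.comp α τ₂) - (Λ.d α ⊔ Λ.d μ)) := by
      funext i
      have h1 : (Λ.d α ⊔ Λ.d μ) i ≤ Λ.d (Λ.comp α τ₂) i := hc'le i
      simp only [Pi.add_apply, Pi.sub_apply, Pi.sup_apply] at h1 ⊢
      omega
    obtain ⟨ρ', t', hcρ', hρt', hdρ', hdt'⟩ := KGraph.exists_factor _ _ _ hsplit'
    have hαle : Λ.d α ≤ Λ.d ρ' := by rw [hdρ']; exact le_sup_left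
    obtain ⟨u₂, hcu₂, hαu₂, hdu₂, -, -⟩ :=
      KGraph.prefix_of_two hcατ₂ rfl hcρ' hρt' hαle
    have hμle : Λ.d μ ≤ Λ.d ρ' := by rw [hdρ']; exact le_sup_right
    obtain ⟨w₂, hcw₂, hμw₂, hdw₂, -, -⟩ :=
      KGraph.prefix_of_two hsμh hμh' hcρ' hρt' hμle
    refine ⟨α, hαF, ⟨(u₂, w₂), hcu₂, hcw₂, by rw [hαu₂, hμw₂], ?_⟩⟩
    rw [Λ.d_comp _ _ hcu₂, hdu₂, hdρ']
    funext i; simp only [Pi.add_apply, Pi.sub_apply, Pi.sup_apply]; omega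
  obtain ⟨α, hαF, hydeg, hyseg⟩ := hyb P hPy F hFfin ⟨hFr, hFex⟩
  obtain ⟨lam, hlamE, β, m1, m2, m3, m4⟩ := hmemF α hαF
  have hdηα2 : Λ.d (Λ.comp η α) = Λ.d η + Λ.d α := Λ.d_comp _ _ m1
  have hlam_le : Λ.d lam ≤ Λ.d η + Λ.d α := by
    intro i
    have h1 := congrFun m4 i
    have h2 := congrFun hdηα2 i
    simp only [Pi.sup_apply, Pi.add_apply] at h1 h2 ⊢
    omega
  set Q : Fin k → ℕ := s' + Λ.d α with hQ
  have hQn : Q - n = P + Λ.d α := by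
    funext i
    simp only [hQ, hs', hP, Pi.add_apply, Pi.sub_apply, Pi.sup_apply]
    omega
  have hQv : ZValid y n Q := by
    intro i
    have h1 : (Q i : ℕ∞) = (n i : ℕ∞) + ((P + Λ.d α) i : ℕ∞) := by
      rw [← Nat.cast_add]
      congr 1
      simp only [hQ, hs', hP, Pi.add_apply, Pi.sub_apply, Pi.sup_apply]
      omega
    rw [h1]
    exact add_le_add le_rfl (hydeg i)
  have hpQ : p + Λ.d lam ≤ Q := by
    intro i
    have h1 := hlam_le i
    have h2 := congrFun hdη i
    simp only [hQ, hs', Pi.add_apply, Pi.sup_apply, Pi.sub_apply] at h1 h2 ⊢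
    omega
  have hplamv : ZValid y n (p + Λ.d lam) := zvalid_mono y n hpQ hQv
  have hplam : p ≤ p + Λ.d lam := by
    intro i; simp only [Pi.add_apply]; omega
  have hs'Q : s' ≤ Q := by
    intro i; simp only [hQ, Pi.add_apply]; omega
  have hseg1 : z.seg s' Q = α := by
    show zseg x y n hx hyr s' Q = α
    rw [zseg_of_ge x y n hx hyr hns', hs'subn, hQn]
    exact hyseg
  have hseg2 : z.seg p Q = Λ.comp lam β := by
    rw [← z.comp_seg p s' Q hps' hs'Q hQv, hseg1, ← hη, m3]
  have hsegsplit : Λ.comp (z.seg p (p + Λ.d lam)) (z.seg (p + Λ.d lam) Q) = Λ.comp lam β := by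
    rw [z.comp_seg p (p + Λ.d lam) Q hplam hpQ hQv, hseg2]
  have hcz : Λ.s (z.seg p (p + Λ.d lam)) = Λ.r (z.seg (p + Λ.d lam) Q) := by
    rw [z.s_seg p (p + Λ.d lam) hplam hplamv, z.r_seg (p + Λ.d lam) Q hpQ hQv]
  have hdz : Λ.d (z.seg p (p + Λ.d lam)) = Λ.d lam := by
    rw [z.d_seg p (p + Λ.d lam) hplam hplamv]
    funext i; simp only [Pi.sub_apply, Pi.add_apply]; omega
  exact ⟨lam, hlamE, fun i => hplamv i, (KGraph.pair_unique hcz m2 hsegsplit hdz).1⟩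

end ZBoundary
theorem stmt7 {k : ℕ} (Λ : KGraph k) (hFA : Λ.FinitelyAligned)
    (hNS : Λ.NoSources) (v : Λ.Obj) (n m : Fin k → ℕ)
    (hLP : Λ.LocalPeriodicity v n m)
    (x : KPath Λ) (hxdeg : ∀ i, x.deg i = ⊤) (hxv : x.vert 0 = v)
    (y : KPath Λ) (hy : y.IsBoundary) (hyr : y.vert 0 = x.vert n)
    (hdy : y.DegLe ((m ⊔ n - m) ⊔ (m ⊔ n - n))) :
    y.ShiftsEq (m ⊔ n - m) (m ⊔ n - n) := by
  set z := zpath x y n hxdeg hyr with hz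
  have hzb : z.IsBoundary := zpath_boundary x y n hxdeg hyr hy hFA
  have hzv : z.vert 0 = v := (zpath_vert0 x y n hxdeg hyr).trans hxv
  obtain ⟨hdz, hn', hm', heq⟩ := hLP z hzb hzv
  have hyn : z.shift n hn' = y := zpath_shift_n x y n hxdeg hyr hn'
  have hyz_n : y = z.shift n hn' := hyn.symm
  have hyz_m : y = z.shift m hm' := hyn.symm.trans heq
  have h1 : y.DegLe (m ⊔ n - m) := KPath.DegLe.mono le_sup_left hdy
  have h2 : y.DegLe (m ⊔ n - n) := KPath.DegLe.mono le_sup_right hdy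
  refine ⟨h1, h2, ?_⟩
  obtain ⟨hA', e1⟩ := KPath.shift_eq_of_eq hyz_m (m ⊔ n - m) h1
  obtain ⟨hB', e2⟩ := KPath.shift_eq_of_eq hyz_n (m ⊔ n - n) h2
  obtain ⟨hab1, e3⟩ := KPath.shift_shift z m (m ⊔ n - m) hm' hA'
  obtain ⟨hab2, e4⟩ := KPath.shift_shift z n (m ⊔ n - n) hn' hB'
  have hm1 : m + (m ⊔ n - m) = m ⊔ n := by
    funext i; simp only [Pi.add_apply, Pi.sub_apply, Pi.sup_apply]; omega
  have hm2 : n + (m ⊔ n - n) = m ⊔ n := by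
    funext i; simp only [Pi.add_apply, Pi.sub_apply, Pi.sup_apply]; omega
  rw [e1, e2, e3, e4, KPath.shift_congr_arg z hm1 hab1 hdz,
    KPath.shift_congr_arg z hm2 hab2 hdz]
end
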